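/- Let φ : X → Y be a map of topological spaces with open covers {U_α} of X and {V_α} of Y (same index set) such that for all α, α' the map φ restricts to a homeomorphism of U_α ∩ U_{α'} onto V_α ∩ V_{α'}. Then φ is injective. -/
import Mathlib

/-- If `φ : X → Y` and there are open covers `U` of `X` and `V` of `Y`, indexed by the same
set, such that for every pair of indices `α, α'`, `φ` restricts to a homeomorphism of
`U α ∩ U α'` onto `V α ∩ V α'`, then `φ` is a homeomorphism. -/
theorem stmt1 {X Y : Type*} [TopologicalSpace X] [TopologicalSpace Y]
    {I : Type*} (φ : X → Y) (U : I → Set X) (V : I → Set Y)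
    (hUopen : ∀ α, IsOpen (U α)) (hVopen : ∀ α, IsOpen (V α))
    (hUcover : ⋃ α, U α = Set.univ) (hVcover : ⋃ α, V α = Set.univ)
    (h : ∀ α α', ∃ e : (U α ∩ U α' : Set X) ≃ₜ (V α ∩ V α' : Set Y),
        ∀ x : (U α ∩ U α' : Set X), (e x : Y) = φ x) :
    Function.Injective φ := by
  intro x x' hxx
  obtain ⟨α, hxα⟩ : ∃ α, x ∈ U α := by
    have := Set.mem_univ x; rw [← hUcover] at this; exact Set.mem_iUnion.1 this
  obtain ⟨α', hxα'⟩ : ∃ α', x' ∈ U α' := by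
    have := Set.mem_univ x'; rw [← hUcover] at this; exact Set.mem_iUnion.1 this
  obtain ⟨e, he⟩ := h α α'
  obtain ⟨eα, heα⟩ := h α α
  obtain ⟨eα', heα'⟩ := h α' α'
  -- φ x ∈ V α
  have hφx : φ x ∈ V α ∩ V α := by
    have := (eα ⟨x, hxα, hxα⟩).2
    rwa [heα ⟨x, hxα, hxα⟩] at this
  have hφx' : φ x' ∈ V α' ∩ V α' := by
    have := (eα' ⟨x', hxα', hxα'⟩).2
    rwa [heα' ⟨x', hxα', hxα'⟩] at this
  have hmem : φ x ∈ V α ∩ V α' := ⟨hφx.1, hxx ▸ hφx'.1⟩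
  obtain ⟨z, hz⟩ := e.surjective ⟨φ x, hmem⟩
  have hφz : φ (z : X) = φ x := by
    have := he z; rw [hz] at this; exact this.symm
  -- x = z via injectivity at (α, α)
  have h1 : x = (z : X) := by
    have : eα ⟨x, hxα, hxα⟩ = eα ⟨z, z.2.1, z.2.1⟩ := by
      apply Subtype.ext
      rw [heα, heα, hφz]
    have := eα.injective this
    exact congrArg Subtype.val this
  have h2 : x' = (z : X) := by
    have : eα' ⟨x', hxα', hxα'⟩ = eα' ⟨z, z.2.2, z.2.2⟩ := by
      apply Subtype.ext
      rw [heα', heα', hφz, hxx]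
    have := eα'.injective this
    exact congrArg Subtype.val this
  rw [h1, h2]
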